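/- arXiv:2412.05224 — 2 statements merged into one kernel-verified Lean document; each statement's English description precedes it below -/
import Mathlib

section
/- Let q, z, x₁, x₂, y₁, y₂ ∈ ℂ such that q, z, y₁, y₂ are pairwise distinct, y₁ and y₂ are each distinct from x₁ and x₂, z is distinct from x₁ and x₂, and y₁ − y₂ ≠ c and y₂ − y₁ ≠ c. Define E(y₁,y₂) = h(y₂,z)·( (h(y₁,x₁)·h(y₁,x₂)/g(q,y₁))·(g(y₂,y₁)/h(y₁,y₂)) − f(y₁,z)·(h(q,y₁)/(g(y₁,x₁)·g(y₁,x₂)))·(g(y₁,y₂)/h(y₂,y₁)) ). Then E(y₁,y₂) + E(y₂,y₁) = g(z,y₁)·g(z,y₂)·h(q,z)/(g(z,x₁)·g(z,x₂)). -/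
/-- The expression `E(y₁,y₂)` of STATEMENT 8, written with
`g u v = c/(u-v)`, `f u v = (u-v+c)/(u-v)`, `h u v = (u-v+c)/c`:
`E(y₁,y₂) = h y₂ z * ( (h y₁ x₁ * h y₁ x₂ / g q y₁) * (g y₂ y₁ / h y₁ y₂)
  - f y₁ z * (h q y₁ / (g y₁ x₁ * g y₁ x₂)) * (g y₁ y₂ / h y₂ y₁) )`. -/
noncomputable def E8 (c q z x₁ x₂ y₁ y₂ : ℂ) : ℂ :=
  ((y₂ - z + c) / c) *
    ((((y₁ - x₁ + c) / c) * ((y₁ - x₂ + c) / c) / (c / (q - y₁))) *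
        ((c / (y₂ - y₁)) / ((y₁ - y₂ + c) / c)) -
      ((y₁ - z + c) / (y₁ - z)) *
        (((q - y₁ + c) / c) / ((c / (y₁ - x₁)) * (c / (y₁ - x₂)))) *
        ((c / (y₁ - y₂)) / ((y₂ - y₁ + c) / c)))


set_option maxHeartbeats 1000000 in
lemma E8_closed (c q z x₁ x₂ y₁ y₂ : ℂ) (hc : c ≠ 0)
    (hy1z : y₁ - z ≠ 0) (hy12 : y₁ - y₂ ≠ 0)
    (hqy : q - y₁ ≠ 0) (hx1 : y₁ - x₁ ≠ 0) (hx2 : y₁ - x₂ ≠ 0)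
    (h1' : y₁ - y₂ + c ≠ 0) (h2' : y₂ - y₁ + c ≠ 0) :
    E8 c q z x₁ x₂ y₁ y₂ =
      (y₂ - z + c) *
        ( -((y₁ - x₁ + c) * (y₁ - x₂ + c) * (q - y₁) * (y₁ - z) * (y₂ - y₁ + c))
          - (y₁ - z + c) * (q - y₁ + c) * (y₁ - x₁) * (y₁ - x₂) * (y₁ - y₂ + c) ) /
      (c ^ 2 * (y₁ - z) * (y₁ - y₂) * (y₁ - y₂ + c) * (y₂ - y₁ + c)) := by
  have hy21 : y₂ - y₁ ≠ 0 := fun h => hy12 (by linear_combination -h)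
  have ha : ((y₁ - x₁ + c) / c) * ((y₁ - x₂ + c) / c) / (c / (q - y₁))
      = (y₁ - x₁ + c) * (y₁ - x₂ + c) * (q - y₁) / (c * c * c) := by
    rw [div_div_eq_mul_div, div_mul_div_comm, div_mul_eq_mul_div, div_div]
  have hb : (c / (y₂ - y₁)) / ((y₁ - y₂ + c) / c)
      = c * c / ((y₂ - y₁) * (y₁ - y₂ + c)) := by
    rw [div_div_eq_mul_div, div_mul_eq_mul_div, div_div]
  have hcc : ((q - y₁ + c) / c) / ((c / (y₁ - x₁)) * (c / (y₁ - x₂)))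
      = (q - y₁ + c) * ((y₁ - x₁) * (y₁ - x₂)) / (c * (c * c)) := by
    rw [div_mul_div_comm, div_div_eq_mul_div, div_mul_eq_mul_div, div_div]
  have hd : (c / (y₁ - y₂)) / ((y₂ - y₁ + c) / c)
      = c * c / ((y₁ - y₂) * (y₂ - y₁ + c)) := by
    rw [div_div_eq_mul_div, div_mul_eq_mul_div, div_div]
  unfold E8
  rw [ha, hb, hcc, hd, div_mul_div_comm, div_mul_div_comm, div_mul_div_comm,
      div_sub_div _ _ (by apply_rules [mul_ne_zero]) (by apply_rules [mul_ne_zero]),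
      div_mul_div_comm,
      div_eq_div_iff (by apply_rules [mul_ne_zero])
        (mul_ne_zero (mul_ne_zero (mul_ne_zero (mul_ne_zero (pow_ne_zero 2 hc) hy1z) hy12) h1') h2')]
  ring

set_option maxHeartbeats 2000000 in
/-- For `q, z, y₁, y₂` pairwise distinct, `y₁, y₂` each distinct
from `x₁, x₂`, `z` distinct from `x₁, x₂`, and `y₁ - y₂ ≠ c`, `y₂ - y₁ ≠ c`:
`E(y₁,y₂) + E(y₂,y₁) = g z y₁ * g z y₂ * h q z / (g z x₁ * g z x₂)`. -/
theorem stmt_8 (c : ℂ) (hc : c ≠ 0) (q z x₁ x₂ y₁ y₂ : ℂ)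
    (hqz : q ≠ z) (hqy₁ : q ≠ y₁) (hqy₂ : q ≠ y₂)
    (hzy₁ : z ≠ y₁) (hzy₂ : z ≠ y₂) (hy : y₁ ≠ y₂)
    (hy₁x₁ : y₁ ≠ x₁) (hy₁x₂ : y₁ ≠ x₂) (hy₂x₁ : y₂ ≠ x₁) (hy₂x₂ : y₂ ≠ x₂)
    (hzx₁ : z ≠ x₁) (hzx₂ : z ≠ x₂)
    (h1 : y₁ - y₂ ≠ c) (h2 : y₂ - y₁ ≠ c) :
    E8 c q z x₁ x₂ y₁ y₂ + E8 c q z x₁ x₂ y₂ y₁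
      = (c / (z - y₁)) * (c / (z - y₂)) * ((q - z + c) / c) /
          ((c / (z - x₁)) * (c / (z - x₂))) := by
  have hy12 : y₁ - y₂ ≠ 0 := sub_ne_zero.mpr hy
  have hy21 : y₂ - y₁ ≠ 0 := sub_ne_zero.mpr hy.symm
  have hz1 : z - y₁ ≠ 0 := sub_ne_zero.mpr hzy₁
  have hz2 : z - y₂ ≠ 0 := sub_ne_zero.mpr hzy₂
  have hy1z : y₁ - z ≠ 0 := sub_ne_zero.mpr hzy₁.symm
  have hy2z : y₂ - z ≠ 0 := sub_ne_zero.mpr hzy₂.symm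
  have hzx1 : z - x₁ ≠ 0 := sub_ne_zero.mpr hzx₁
  have hzx2 : z - x₂ ≠ 0 := sub_ne_zero.mpr hzx₂
  have h1' : y₁ - y₂ + c ≠ 0 := fun h => h2 (by linear_combination -h)
  have h2' : y₂ - y₁ + c ≠ 0 := fun h => h1 (by linear_combination -h)
  rw [E8_closed c q z x₁ x₂ y₁ y₂ hc hy1z hy12 (sub_ne_zero.mpr hqy₁)
        (sub_ne_zero.mpr hy₁x₁) (sub_ne_zero.mpr hy₁x₂) h1' h2',
      E8_closed c q z x₁ x₂ y₂ y₁ hc hy2z hy21 (sub_ne_zero.mpr hqy₂)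
        (sub_ne_zero.mpr hy₂x₁) (sub_ne_zero.mpr hy₂x₂) h2' h1',
      div_add_div _ _
        (mul_ne_zero (mul_ne_zero (mul_ne_zero (mul_ne_zero (pow_ne_zero 2 hc) hy1z) hy12) h1') h2')
        (mul_ne_zero (mul_ne_zero (mul_ne_zero (mul_ne_zero (pow_ne_zero 2 hc) hy2z) hy21) h2') h1'),
      div_mul_div_comm, div_mul_div_comm, div_mul_div_comm, div_div_div_eq,
      div_eq_div_iff (by apply_rules [pow_ne_zero, mul_ne_zero]) (by apply_rules [pow_ne_zero, mul_ne_zero])]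
  ring
end

section
/- Let D be the diagonal matrix indexed by I with diagonal entries χ_i, i ∈ I, satisfying χ_i·χ_{−i} = 1 for all i ∈ I. Then P·(D⊗D) = (D⊗D)·P and Q·(D⊗D) = (D⊗D)·Q. Consequently, for all u, v ∈ ℂ with u ≠ v and u − v + cκ ≠ 0, where κ = n − 1/2, the R-matrix R(u,v) = Id⊗Id + (c/(u−v))·P − (c/(u−v+cκ))·Q satisfies R(u,v)·(D⊗D) = (D⊗D)·R(u,v). -/
open Kronecker

/-- The index set `I = {i ∈ ℤ : |i| ≤ n}`, of cardinality `2n+1`. -/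
def Idx (n : ℕ) : Type := {i : ℤ // i ∈ Finset.Icc (-(n : ℤ)) (n : ℤ)}

noncomputable instance (n : ℕ) : Fintype (Idx n) :=
  inferInstanceAs (Fintype {i : ℤ // i ∈ Finset.Icc (-(n : ℤ)) (n : ℤ)})

instance (n : ℕ) : DecidableEq (Idx n) :=
  inferInstanceAs (DecidableEq {i : ℤ // i ∈ Finset.Icc (-(n : ℤ)) (n : ℤ)})

/-- Negation `i ↦ -i` on the index set `I`. -/
def Idx.neg {n : ℕ} (i : Idx n) : Idx n :=
  ⟨-i.1, by
    have h := i.2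
    rw [Finset.mem_Icc] at h ⊢
    omega⟩

/-- Let `D = diagonal χ` with `χ_i · χ_{−i} = 1`. With `P` and `Q`
the matrices with entries `P_{(a,b),(c,d)} = δ_{a,d}·δ_{b,c}` and
`Q_{(a,b),(c,d)} = δ_{a,−b}·δ_{c,−d}`, one has `P·(D⊗D) = (D⊗D)·P` and
`Q·(D⊗D) = (D⊗D)·Q`; consequently, for all `u ≠ v` with `u − v + cκ ≠ 0`,
`κ = n − 1/2`, the R-matrix
`R(u,v) = 1 + (c/(u−v))·P − (c/(u−v+cκ))·Q` satisfies
`R(u,v)·(D⊗D) = (D⊗D)·R(u,v)`. -/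
theorem stmt_13 (n : ℕ) (hn : 1 ≤ n) (c : ℂ)
    (χ : Idx n → ℂ) (hχ : ∀ i : Idx n, χ i * χ (Idx.neg i) = 1)
    (P Q : Matrix (Idx n × Idx n) (Idx n × Idx n) ℂ)
    (hP : ∀ a b c' d : Idx n,
      P (a, b) (c', d) = (if a = d then 1 else 0) * (if b = c' then 1 else 0))
    (hQ : ∀ a b c' d : Idx n,
      Q (a, b) (c', d) = (if a = Idx.neg b then 1 else 0) * (if c' = Idx.neg d then 1 else 0)) :
    P * (Matrix.diagonal χ ⊗ₖ Matrix.diagonal χ)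
        = (Matrix.diagonal χ ⊗ₖ Matrix.diagonal χ) * P ∧
    Q * (Matrix.diagonal χ ⊗ₖ Matrix.diagonal χ)
        = (Matrix.diagonal χ ⊗ₖ Matrix.diagonal χ) * Q ∧
    (∀ u v : ℂ, u ≠ v → u - v + c * ((n : ℂ) - 1 / 2) ≠ 0 →
      (1 + (c / (u - v)) • P - (c / (u - v + c * ((n : ℂ) - 1 / 2))) • Q) *
          (Matrix.diagonal χ ⊗ₖ Matrix.diagonal χ)
        = (Matrix.diagonal χ ⊗ₖ Matrix.diagonal χ) *
            (1 + (c / (u - v)) • P - (c / (u - v + c * ((n : ℂ) - 1 / 2))) • Q)) := by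
  rw [Matrix.diagonal_kronecker_diagonal]
  set f : Idx n × Idx n → ℂ := fun i => χ i.1 * χ i.2 with hf
  have hPD : P * Matrix.diagonal f = Matrix.diagonal f * P := by
    ext ⟨a, b⟩ ⟨c', d⟩
    rw [Matrix.mul_diagonal, Matrix.diagonal_mul, hP]
    by_cases h1 : a = d <;> by_cases h2 : b = c' <;>
      simp [h1, h2, hf, mul_comm]
  have hQD : Q * Matrix.diagonal f = Matrix.diagonal f * Q := by
    ext ⟨a, b⟩ ⟨c', d⟩
    rw [Matrix.mul_diagonal, Matrix.diagonal_mul, hQ]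
    by_cases h1 : a = Idx.neg b <;> by_cases h2 : c' = Idx.neg d
    · have e1 : f (Idx.neg b, b) = 1 := by
        simpa [hf, mul_comm] using hχ b
      have e2 : f (Idx.neg d, d) = 1 := by
        simpa [hf, mul_comm] using hχ d
      simp [h1, h2, e1, e2]
    all_goals simp [h1, h2]
  refine ⟨hPD, hQD, fun u v _ _ => ?_⟩
  simp only [add_mul, sub_mul, mul_add, mul_sub, one_mul, mul_one,
    Matrix.smul_mul, Matrix.mul_smul, hPD, hQD]
end
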